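/- For a ≥ 2 and n ≥ a²+1, the maximum size mex(n;a) of a graph of order n with monophonic position number a satisfies t_{n,a} − ⌊n/a⌋·C(a,2) ≤ mex(n;a) ≤ t_{n,a} − 1, where t_{n,a} is the number of edges of the Turán graph T_{n,a}. -/

import Mathlib

open SimpleGraph

/-- A walk is an *induced (monophonic) path* if it is a path and vertices on the
walk are adjacent in `G` exactly when they are consecutive on the walk. -/
def IsInducedPathW {V : Type*} (G : SimpleGraph V) {u v : V} (p : G.Walk u v) : Prop :=
  p.IsPath ∧ ∀ a b : V, a ∈ p.support → b ∈ p.support → (G.Adj a b ↔ p.toSubgraph.Adj a b)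

/-- A walk is a *geodesic* if it is a shortest path between its endpoints. -/
def IsGeodesicW {V : Type*} (G : SimpleGraph V) {u v : V} (p : G.Walk u v) : Prop :=
  p.IsPath ∧ p.length = G.dist u v

/-- A set of vertices is in *monophonic position* if no induced path of `G`
contains more than two of its vertices. -/
def IsMpSet {V : Type*} (G : SimpleGraph V) (S : Set V) : Prop :=
  ∀ ⦃u v : V⦄ (p : G.Walk u v), IsInducedPathW G p → (S ∩ {x | x ∈ p.support}).ncard ≤ 2

/-- A set of vertices is in *general position* if no geodesic of `G` contains
more than two of its vertices. -/
def IsGpSet {V : Type*} (G : SimpleGraph V) (S : Set V) : Prop :=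
  ∀ ⦃u v : V⦄ (p : G.Walk u v), IsGeodesicW G p → (S ∩ {x | x ∈ p.support}).ncard ≤ 2

/-- The monophonic position number `mp(G)`. -/
noncomputable def mpNum {V : Type*} (G : SimpleGraph V) : ℕ :=
  sSup {n | ∃ S : Set V, IsMpSet G S ∧ S.ncard = n}

/-- The general position number `gp(G)`. -/
noncomputable def gpNum {V : Type*} (G : SimpleGraph V) : ℕ :=
  sSup {n | ∃ S : Set V, IsGpSet G S ∧ S.ncard = n}

/-- `mex n a`: the largest number of edges of a graph of order `n` with
monophonic position number `a`. -/
noncomputable def mexNum (n a : ℕ) : ℕ :=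
  sSup {m | ∃ G : SimpleGraph (Fin n), mpNum G = a ∧ G.edgeSet.ncard = m}

namespace MexAux
variable {V : Type*} {G : SimpleGraph V} {u v : V}

lemma getVert_mem_support (p : G.Walk u v) (i : ℕ) : p.getVert i ∈ p.support := by
  induction p generalizing i with
  | nil => simp [SimpleGraph.Walk.getVert]
  | cons h q ih =>
    cases i with
    | zero => simp
    | succ i => simp only [Walk.getVert_cons_succ, Walk.support_cons, List.mem_cons]; exact Or.inr (ih i)

lemma exists_getVert_of_mem_support (p : G.Walk u v) {x : V} (hx : x ∈ p.support) :
    ∃ i ≤ p.length, p.getVert i = x := by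
  induction p with
  | nil => simp at hx; exact ⟨0, by simp, by simp [hx, Walk.getVert]⟩
  | cons h q ih =>
    rw [Walk.support_cons, List.mem_cons] at hx
    rcases hx with rfl | hx
    · exact ⟨0, by simp, by simp⟩
    · obtain ⟨i, hi, hgi⟩ := ih hx
      exact ⟨i + 1, by simp [Nat.succ_le_succ hi], by simpa [Walk.getVert_cons_succ] using hgi⟩

lemma path_getVert_inj {p : G.Walk u v} (hp : p.IsPath) {i j : ℕ}
    (hi : i ≤ p.length) (hj : j ≤ p.length) (h : p.getVert i = p.getVert j) : i = j := by
  induction p generalizing i j with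
  | nil => simp only [Walk.length_nil, Nat.le_zero] at hi hj; omega
  | @cons u u' w hadj q ih =>
    have hp' : q.IsPath := hp.of_cons
    have hu : u ∉ q.support := by
      have := hp.support_nodup
      rw [Walk.support_cons] at this
      exact (List.nodup_cons.mp this).1
    cases i with
    | zero =>
      cases j with
      | zero => rfl
      | succ j =>
        exfalso
        rw [Walk.getVert_zero, Walk.getVert_cons_succ] at h
        exact hu (h ▸ getVert_mem_support q j)
    | succ i =>
      cases j with
      | zero =>
        exfalso
        rw [Walk.getVert_zero, Walk.getVert_cons_succ] at h
        exact hu (h.symm ▸ getVert_mem_support q i)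
      | succ j =>
        rw [Walk.getVert_cons_succ, Walk.getVert_cons_succ] at h
        simp only [Walk.length_cons] at hi hj
        exact congrArg Nat.succ (ih hp' (by omega) (by omega) h)

lemma path_adj_getVert_iff {p : G.Walk u v} (hp : p.IsPath) {i j : ℕ}
    (hi : i ≤ p.length) (hj : j ≤ p.length)
    (h : p.toSubgraph.Adj (p.getVert i) (p.getVert j)) : i = j + 1 ∨ j = i + 1 := by
  obtain ⟨k, hk, hklen⟩ := (Walk.toSubgraph_adj_iff _).mp h
  rw [Sym2.eq_iff] at hk
  rcases hk with ⟨h1, h2⟩ | ⟨h1, h2⟩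
  · right
    have := path_getVert_inj hp (by omega) hi h1
    have := path_getVert_inj hp (by omega) hj h2
    omega
  · left
    have := path_getVert_inj hp (by omega) hj h1
    have := path_getVert_inj hp (by omega) hi h2
    omega

end MexAux

namespace MexAux2
open MexAux
variable {V : Type*} {G : SimpleGraph V} {u v : V}

lemma path_no_triangle {p : G.Walk u v} (hp : p.IsPath) {x y z : V}
    (hxy : p.toSubgraph.Adj x y) (hyz : p.toSubgraph.Adj y z)
    (hxz : p.toSubgraph.Adj x z) : False := by
  obtain ⟨px, hpx, hgx⟩ := exists_getVert_of_mem_support p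
    ((Walk.mem_verts_toSubgraph p).mp hxy.fst_mem)
  obtain ⟨py, hpy, hgy⟩ := exists_getVert_of_mem_support p
    ((Walk.mem_verts_toSubgraph p).mp hxy.snd_mem)
  obtain ⟨pz, hpz, hgz⟩ := exists_getVert_of_mem_support p
    ((Walk.mem_verts_toSubgraph p).mp hyz.snd_mem)
  have h1 := path_adj_getVert_iff hp hpx hpy (by rw [hgx, hgy]; exact hxy)
  have h2 := path_adj_getVert_iff hp hpy hpz (by rw [hgy, hgz]; exact hyz)
  have h3 := path_adj_getVert_iff hp hpx hpz (by rw [hgx, hgz]; exact hxz)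
  omega

lemma isMpSet_of_clique [Finite V] {S : Set V} (hS : S.Pairwise G.Adj) : IsMpSet G S := by
  intro u v p hp
  by_contra hc
  push_neg at hc
  have hlt : 2 < (S ∩ {x | x ∈ p.support}).ncard := by omega
  obtain ⟨x, hx, y, hy, z, hz, hxy, hxz, hyz⟩ :=
    (Set.two_lt_ncard (Set.toFinite _)).mp hlt
  have hadj : ∀ a b : V, a ∈ S ∩ {x | x ∈ p.support} → b ∈ S ∩ {x | x ∈ p.support} → a ≠ b →
        p.toSubgraph.Adj a b := fun a b ha hb hab =>
      (hp.2 a b ha.2 hb.2).mp (hS ha.1 hb.1 hab)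
  exact path_no_triangle hp.1 (hadj x y hx hy hxy) (hadj y z hy hz hyz) (hadj x z hx hz hxz)

lemma not_isMpSet_of_three [Finite V] {S : Set V} {x y z : V} {p : G.Walk u v}
    (hp : IsInducedPathW G p) (hxS : x ∈ S) (hyS : y ∈ S) (hzS : z ∈ S)
    (hxp : x ∈ p.support) (hyp : y ∈ p.support) (hzp : z ∈ p.support)
    (hxy : x ≠ y) (hxz : x ≠ z) (hyz : y ≠ z) : ¬ IsMpSet G S := by
  intro hmp
  have hsub : {x, y, z} ⊆ S ∩ {w | w ∈ p.support} := by
    intro w hw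
    rcases hw with rfl | rfl | rfl
    · exact ⟨hxS, hxp⟩
    · exact ⟨hyS, hyp⟩
    · exact ⟨hzS, hzp⟩
  have h3 : ({x, y, z} : Set V).ncard = 3 := by
    rw [Set.ncard_insert_of_notMem (by simp [hxy, hxz]) (Set.toFinite _), Set.ncard_pair hyz]
  have := Set.ncard_le_ncard hsub (Set.toFinite _)
  have h2 := hmp p hp
  omega

end MexAux2

namespace MexAux3
open MexAux MexAux2 Walk
variable {V : Type*} {G : SimpleGraph V}

lemma induced_P3 {v0 v1 v2 : V} (h01 : G.Adj v0 v1) (h12 : G.Adj v1 v2)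
    (h02 : ¬G.Adj v0 v2) (n02 : v0 ≠ v2) :
    ∃ (p : G.Walk v0 v2), IsInducedPathW G p ∧
      v0 ∈ p.support ∧ v1 ∈ p.support ∧ v2 ∈ p.support := by
  refine ⟨Walk.cons h01 (Walk.cons h12 Walk.nil), ⟨?_, ?_⟩, ?_, ?_, ?_⟩
  · simp [Walk.isPath_def, h01.ne, h12.ne, n02]
  · intro a b ha hb
    simp only [Walk.support_cons, Walk.support_nil, List.mem_cons, List.not_mem_nil,
      or_false, List.mem_singleton] at ha hb
    have h10 := h01.symm
    have h21 := h12.symm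
    have h20 : ¬G.Adj v2 v0 := fun h => h02 h.symm
    rcases ha with rfl | rfl | rfl <;> rcases hb with rfl | rfl | rfl <;>
      simp_all [Walk.toSubgraph, Sym2.eq_iff, h01.ne, h12.ne, n02, h01.ne', h12.ne', n02.symm,
        SimpleGraph.irrefl]
  · simp
  · simp
  · simp

lemma induced_P4 {v0 v1 v2 v3 : V} (h01 : G.Adj v0 v1) (h12 : G.Adj v1 v2) (h23 : G.Adj v2 v3)
    (h02 : ¬G.Adj v0 v2) (h03 : ¬G.Adj v0 v3) (h13 : ¬G.Adj v1 v3)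
    (n02 : v0 ≠ v2) (n03 : v0 ≠ v3) (n13 : v1 ≠ v3) :
    ∃ (p : G.Walk v0 v3), IsInducedPathW G p ∧
      v0 ∈ p.support ∧ v1 ∈ p.support ∧ v2 ∈ p.support ∧ v3 ∈ p.support := by
  refine ⟨Walk.cons h01 (Walk.cons h12 (Walk.cons h23 Walk.nil)), ⟨?_, ?_⟩, ?_, ?_, ?_, ?_⟩
  · simp [Walk.isPath_def, h01.ne, h12.ne, h23.ne, n02, n03, n13]
  · intro a b ha hb
    simp only [Walk.support_cons, Walk.support_nil, List.mem_cons, List.not_mem_nil,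
      or_false, List.mem_singleton] at ha hb
    have h10 := h01.symm
    have h21 := h12.symm
    have h32 := h23.symm
    have h20 : ¬G.Adj v2 v0 := fun h => h02 h.symm
    have h30 : ¬G.Adj v3 v0 := fun h => h03 h.symm
    have h31 : ¬G.Adj v3 v1 := fun h => h13 h.symm
    rcases ha with rfl | rfl | rfl | rfl <;> rcases hb with rfl | rfl | rfl | rfl <;>
      simp_all [Walk.toSubgraph, Sym2.eq_iff, h01.ne, h12.ne, h23.ne, n02, n03, n13,
        h01.ne', h12.ne', h23.ne', n02.symm, n03.symm, n13.symm, SimpleGraph.irrefl]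
  · simp
  · simp
  · simp
  · simp

lemma induced_P5 {v0 v1 v2 v3 v4 : V} (h01 : G.Adj v0 v1) (h12 : G.Adj v1 v2)
    (h23 : G.Adj v2 v3) (h34 : G.Adj v3 v4)
    (h02 : ¬G.Adj v0 v2) (h03 : ¬G.Adj v0 v3) (h04 : ¬G.Adj v0 v4)
    (h13 : ¬G.Adj v1 v3) (h14 : ¬G.Adj v1 v4) (h24 : ¬G.Adj v2 v4)
    (n02 : v0 ≠ v2) (n03 : v0 ≠ v3) (n04 : v0 ≠ v4) (n13 : v1 ≠ v3) (n14 : v1 ≠ v4)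
    (n24 : v2 ≠ v4) :
    ∃ (p : G.Walk v0 v4), IsInducedPathW G p ∧
      v0 ∈ p.support ∧ v1 ∈ p.support ∧ v2 ∈ p.support ∧ v3 ∈ p.support ∧ v4 ∈ p.support := by
  refine ⟨Walk.cons h01 (Walk.cons h12 (Walk.cons h23 (Walk.cons h34 Walk.nil))),
    ⟨?_, ?_⟩, ?_, ?_, ?_, ?_, ?_⟩
  · simp [Walk.isPath_def, h01.ne, h12.ne, h23.ne, h34.ne, n02, n03, n04, n13, n14, n24]
  · intro a b ha hb
    simp only [Walk.support_cons, Walk.support_nil, List.mem_cons, List.not_mem_nil,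
      or_false, List.mem_singleton] at ha hb
    have h10 := h01.symm
    have h21 := h12.symm
    have h32 := h23.symm
    have h43 := h34.symm
    have h20 : ¬G.Adj v2 v0 := fun h => h02 h.symm
    have h30 : ¬G.Adj v3 v0 := fun h => h03 h.symm
    have h40 : ¬G.Adj v4 v0 := fun h => h04 h.symm
    have h31 : ¬G.Adj v3 v1 := fun h => h13 h.symm
    have h41 : ¬G.Adj v4 v1 := fun h => h14 h.symm
    have h42 : ¬G.Adj v4 v2 := fun h => h24 h.symm
    rcases ha with rfl | rfl | rfl | rfl | rfl <;> rcases hb with rfl | rfl | rfl | rfl | rfl <;>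
      simp_all [Walk.toSubgraph, Sym2.eq_iff, h01.ne, h12.ne, h23.ne, h34.ne,
        n02, n03, n04, n13, n14, n24, h01.ne', h12.ne', h23.ne', h34.ne',
        n02.symm, n03.symm, n04.symm, n13.symm, n14.symm, n24.symm, SimpleGraph.irrefl]
  · simp
  · simp
  · simp
  · simp
  · simp

end MexAux3

namespace MexAux4
open MexAux MexAux2 MexAux3 Walk

variable {V : Type*} [Fintype V] {G : SimpleGraph V}

lemma mpSet_bddAbove : BddAbove {m | ∃ S : Set V, IsMpSet G S ∧ S.ncard = m} := by
  refine ⟨Fintype.card V, fun m ⟨S, _, hS⟩ => ?_⟩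
  subst hS
  simpa [Set.ncard_univ] using Set.ncard_le_ncard (Set.subset_univ S) (Set.toFinite _)

lemma le_mpNum {S : Set V} (h : IsMpSet G S) : S.ncard ≤ mpNum G :=
  le_csSup mpSet_bddAbove ⟨S, h, rfl⟩

lemma mpNum_le {k : ℕ} (h : ∀ S : Set V, IsMpSet G S → S.ncard ≤ k) : mpNum G ≤ k :=
  csSup_le' (fun m ⟨S, hS, hm⟩ => hm ▸ h S hS)

lemma mpNum_ge_of_clique (h : ¬ G.CliqueFree (a + 1)) : a + 1 ≤ mpNum G := by
  simp only [SimpleGraph.CliqueFree, not_forall, not_not] at h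
  obtain ⟨t, ht⟩ := h
  have hmp : IsMpSet G (↑t : Set V) := isMpSet_of_clique ht.1
  have : (↑t : Set V).ncard = a + 1 := by rw [Set.ncard_coe_finset, ht.2]
  exact this ▸ le_mpNum hmp

end MexAux4

namespace MexAux5
open MexAux MexAux2 MexAux3 MexAux4 Walk

lemma isMpSet_preimage {V W : Type*} {G : SimpleGraph V} {H : SimpleGraph W}
    (e : G ≃g H) {S : Set W} (hS : IsMpSet H S) : IsMpSet G (⇑e ⁻¹' S) := by
  intro u v p hp
  have hinj : Function.Injective (⇑e) := e.toEquiv.injective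
  have hp' : IsInducedPathW H (p.map e.toHom) := by
    refine ⟨Walk.map_isPath_of_injective hinj hp.1, ?_⟩
    intro x y hx hy
    rw [Walk.support_map] at hx hy
    obtain ⟨x', hx', rfl⟩ := List.mem_map.mp hx
    obtain ⟨y', hy', rfl⟩ := List.mem_map.mp hy
    show H.Adj (e x') (e y') ↔ (p.map e.toHom).toSubgraph.Adj (e x') (e y')
    have h1 : H.Adj (e x') (e y') ↔ G.Adj x' y' := e.map_adj_iff
    rw [h1, hp.2 x' y' hx' hy', Walk.toSubgraph_map]
    constructor
    · intro h
      exact ⟨x', y', h, rfl, rfl⟩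
    · intro h
      obtain ⟨a', b', hab, ha, hb⟩ := h
      rwa [hinj ha, hinj hb] at hab
  have hb := hS (p.map e.toHom) hp'
  have himg : (⇑e '' ((⇑e ⁻¹' S) ∩ {x | x ∈ p.support})) ⊆
      S ∩ {x | x ∈ (p.map e.toHom).support} := by
    rintro _ ⟨x, ⟨hxS, hxp⟩, rfl⟩
    refine ⟨hxS, ?_⟩
    rw [Set.mem_setOf_eq, Walk.support_map]
    exact List.mem_map.mpr ⟨x, hxp, rfl⟩
  calc ((⇑e ⁻¹' S) ∩ {x | x ∈ p.support}).ncard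
      = (⇑e '' ((⇑e ⁻¹' S) ∩ {x | x ∈ p.support})).ncard :=
        (Set.ncard_image_of_injective _ hinj).symm
    _ ≤ (S ∩ {x | x ∈ (p.map e.toHom).support}).ncard := by
        exact Set.ncard_le_ncard himg (Set.Finite.inter_of_right ((p.map e.toHom).support.finite_toSet) S)
    _ ≤ 2 := hb

end MexAux5

namespace MexAux6
open MexAux MexAux2 MexAux3 MexAux4 MexAux5 Walk

lemma turan_adj {n a : ℕ} (v w : Fin n) :
    (turanGraph n a).Adj v w ↔ (v : ℕ) % a ≠ (w : ℕ) % a := Iff.rfl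

lemma turan_induced_length_le {n a : ℕ} {u v : Fin n} {p : (turanGraph n a).Walk u v}
    (hp : IsInducedPathW (turanGraph n a) p) : p.length ≤ 2 := by
  by_contra hlen
  push_neg at hlen
  set g := p.getVert with hg
  have key : ∀ i j : ℕ, i ≤ p.length → j ≤ p.length → ¬(i = j + 1 ∨ j = i + 1) →
      ¬(turanGraph n a).Adj (g i) (g j) := by
    intro i j hi hj hij hadj
    have := (hp.2 (g i) (g j) (MexAux.getVert_mem_support p i) (MexAux.getVert_mem_support p j)).mp hadj
    exact hij (path_adj_getVert_iff hp.1 hi hj this)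
  have h02 : ¬(turanGraph n a).Adj (g 0) (g 2) := key 0 2 (by omega) (by omega) (by omega)
  have h13 : ¬(turanGraph n a).Adj (g 1) (g 3) := key 1 3 (by omega) (by omega) (by omega)
  have h23 : (turanGraph n a).Adj (g 2) (g 3) := p.adj_getVert_succ (by omega)
  have h03 : (turanGraph n a).Adj (g 0) (g 3) := by
    rw [turan_adj] at *
    simp only [not_not] at h02
    omega
  exact key 0 3 (by omega) (by omega) (by omega) h03

lemma turan_res_isMpSet {n a : ℕ} {S : Set (Fin n)}
    (hres : ∀ x ∈ S, ∀ y ∈ S, (x : ℕ) % a = (y : ℕ) % a) : IsMpSet (turanGraph n a) S := by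
  intro u v p hp
  by_contra hc
  push_neg at hc
  have hlt : 2 < (S ∩ {x | x ∈ p.support}).ncard := hc
  obtain ⟨x, hx, y, hy, z, hz, hxy, hxz, hyz⟩ :=
    (Set.two_lt_ncard (Set.toFinite _)).mp hlt
  classical
  have hsub : ({x, y, z} : Finset (Fin n)) ⊆ p.support.toFinset := by
    intro w hw
    simp only [Finset.mem_insert, Finset.mem_singleton] at hw
    rcases hw with rfl | rfl | rfl <;> simp only [List.mem_toFinset]
    · exact hx.2
    · exact hy.2
    · exact hz.2
  have hcard3 : ({x, y, z} : Finset (Fin n)).card = 3 := by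
    rw [Finset.card_insert_of_notMem (by simp [hxy, hxz]),
      Finset.card_insert_of_notMem (by simp [hyz]), Finset.card_singleton]
  have hsupl : p.support.toFinset.card ≤ 3 := by
    have h1 : p.support.length = p.length + 1 := p.length_support
    have := p.support.toFinset_card_le
    have hl2 := turan_induced_length_le hp
    omega
  have heq : ({x, y, z} : Finset (Fin n)) = p.support.toFinset :=
    Finset.eq_of_subset_of_card_le hsub (by omega)
  -- the walk has length ≥ 1 since its support has ≥ 3 distinct elements
  have hlen1 : 1 ≤ p.length := by
    by_contra h0
    push_neg at h0
    interval_cases hl : p.length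
    · have : p.support.toFinset.card ≤ 1 := by
        have h1 : p.support.length = p.length + 1 := p.length_support
        have := p.support.toFinset_card_le
        omega
      rw [← heq, hcard3] at this
      omega
  have hadj01 : (turanGraph n a).Adj (p.getVert 0) (p.getVert 1) := p.adj_getVert_succ (by omega)
  have h0m : p.getVert 0 ∈ ({x, y, z} : Finset (Fin n)) := by
    rw [heq]; simp only [List.mem_toFinset]; exact MexAux.getVert_mem_support p 0
  have h1m : p.getVert 1 ∈ ({x, y, z} : Finset (Fin n)) := by
    rw [heq]; simp only [List.mem_toFinset]; exact MexAux.getVert_mem_support p 1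
  have hS0 : p.getVert 0 ∈ S := by
    simp only [Finset.mem_insert, Finset.mem_singleton] at h0m
    rcases h0m with rfl | rfl | rfl
    · exact hx.1
    · exact hy.1
    · exact hz.1
  have hS1 : p.getVert 1 ∈ S := by
    simp only [Finset.mem_insert, Finset.mem_singleton] at h1m
    rcases h1m with rfl | rfl | rfl
    · exact hx.1
    · exact hy.1
    · exact hz.1
  exact (turan_adj _ _).mp hadj01 (hres _ hS0 _ hS1)

end MexAux6

namespace MexAux7
open MexAux MexAux2 MexAux3 MexAux4 MexAux5 MexAux6 Walk

lemma mpNum_ge_succ_of_iso_turan {n a : ℕ} (ha : 0 < a) (hn : a ^ 2 + 1 ≤ n)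
    {G : SimpleGraph (Fin n)} (e : G ≃g turanGraph n a) : a + 1 ≤ mpNum G := by
  have hf : ∀ k : Fin (a + 1), (k : ℕ) * a < n := by
    intro k
    have hk : (k : ℕ) ≤ a := Nat.lt_succ_iff.mp k.2
    have : (k : ℕ) * a ≤ a * a := Nat.mul_le_mul_right a hk
    have : a * a = a ^ 2 := (sq a).symm
    omega
  set f : Fin (a + 1) → Fin n := fun k => ⟨(k : ℕ) * a, hf k⟩ with hfdef
  have hinj : Function.Injective f := by
    intro k k' h
    have : (k : ℕ) * a = (k' : ℕ) * a := congrArg Fin.val h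
    exact Fin.ext (Nat.eq_of_mul_eq_mul_right ha this)
  set S : Set (Fin n) := Set.range f with hS
  have hres : ∀ x ∈ S, ∀ y ∈ S, (x : ℕ) % a = (y : ℕ) % a := by
    rintro x ⟨k, rfl⟩ y ⟨k', rfl⟩
    simp [hfdef, Nat.mul_mod_left]
  have hmpS : IsMpSet (turanGraph n a) S := turan_res_isMpSet hres
  have hmpG : IsMpSet G (⇑e ⁻¹' S) := isMpSet_preimage e hmpS
  have hcard : (⇑e ⁻¹' S).ncard = a + 1 := by
    rw [Set.ncard_preimage_of_injective_subset_range (f := ⇑e) e.injective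
      (by rw [Set.range_eq_univ.mpr e.surjective]; exact Set.subset_univ S)]
    have : S = f '' Set.univ := by rw [Set.image_univ, hS]
    rw [this, Set.ncard_image_of_injective _ hinj, Set.ncard_univ]
    simp
  calc a + 1 = (⇑e ⁻¹' S).ncard := hcard.symm
    _ ≤ mpNum G := le_mpNum hmpG

end MexAux7

namespace MexAux8
open MexAux MexAux2 MexAux3 MexAux4 MexAux5 MexAux6 MexAux7 Walk

lemma edgeSet_ncard_eq {V : Type*} [Fintype V] (G : SimpleGraph V) [DecidableRel G.Adj]
    [DecidableEq V] : G.edgeSet.ncard = G.edgeFinset.card := by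
  rw [← coe_edgeFinset, Set.ncard_coe_finset]

theorem edge_le_of_mpNum_eq {n a : ℕ} (ha : 2 ≤ a) (hn : a ^ 2 + 1 ≤ n)
    (G : SimpleGraph (Fin n)) (hmp : mpNum G = a) :
    G.edgeSet.ncard ≤ (turanGraph n a).edgeSet.ncard - 1 := by
  classical
  have ha0 : 0 < a := by omega
  have hcf : G.CliqueFree (a + 1) := by
    by_contra h
    have := mpNum_ge_of_clique h
    omega
  have htm := isTuranMaximal_turanGraph (n := n) ha0
  have hle : G.edgeFinset.card ≤ (turanGraph n a).edgeFinset.card := htm.2 hcf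
  have hne : G.edgeFinset.card ≠ (turanGraph n a).edgeFinset.card := by
    intro heq
    have hG_tm : G.IsTuranMaximal a := ⟨hcf, @fun H inst hH => heq ▸ @htm.2 H inst hH⟩
    obtain ⟨e⟩ := hG_tm.nonempty_iso_turanGraph
    rw [Fintype.card_fin] at e
    have := mpNum_ge_succ_of_iso_turan ha0 hn e
    omega
  rw [edgeSet_ncard_eq, edgeSet_ncard_eq]
  omega

end MexAux8

def consG (n a : ℕ) : SimpleGraph (Fin n) where
  Adj v w := (v : ℕ) % a ≠ (w : ℕ) % a ∧ ((v : ℕ) / a ≠ (w : ℕ) / a ∨ (v : ℕ) / a = n / a)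
  symm := ⟨by
    intro v w ⟨h1, h2⟩
    refine ⟨h1.symm, ?_⟩
    rcases h2 with h | h
    · exact Or.inl h.symm
    · rcases eq_or_ne ((w : ℕ) / a) ((v : ℕ) / a) with he | he
      · exact Or.inr (he.trans h)
      · exact Or.inl he⟩
  loopless := ⟨fun v h => h.1 rfl⟩

lemma consG_adj {n a : ℕ} (v w : Fin n) :
    (consG n a).Adj v w ↔ ((v : ℕ) % a ≠ (w : ℕ) % a ∧
      ((v : ℕ) / a ≠ (w : ℕ) / a ∨ (v : ℕ) / a = n / a)) := Iff.rfl

lemma not_consG_adj {n a : ℕ} (v w : Fin n) :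
    ¬ (consG n a).Adj v w ↔ ((v : ℕ) % a = (w : ℕ) % a ∨
      ((v : ℕ) / a = (w : ℕ) / a ∧ (v : ℕ) / a ≠ n / a)) := by
  rw [consG_adj]
  tauto

lemma fin_eq_of_mod_div {n a : ℕ} (ha : 0 < a) {v w : Fin n}
    (h1 : (v : ℕ) % a = (w : ℕ) % a) (h2 : (v : ℕ) / a = (w : ℕ) / a) : v = w := by
  have hv := Nat.div_add_mod (v : ℕ) a
  have hw := Nat.div_add_mod (w : ℕ) a
  have h3 : a * ((v : ℕ) / a) = a * ((w : ℕ) / a) := by rw [h2]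
  exact Fin.ext (by omega)

lemma mk_lt {n a : ℕ} (ha : 0 < a) {i j : ℕ} (hi : i < a) (hj : j < n / a) :
    a * j + i < n := by
  have h1 : a * (j + 1) ≤ a * (n / a) := Nat.mul_le_mul_left a hj
  have h2 : a * (n / a) ≤ n := Nat.mul_div_le n a
  have h0 : a * (j + 1) = a * j + a := by ring
  omega

lemma mk_mod {n a : ℕ} {i j : ℕ} (hi : i < a) (h : a * j + i < n) :
    (((⟨a * j + i, h⟩ : Fin n)) : ℕ) % a = i := by
  simp [Nat.mul_add_mod, Nat.mod_eq_of_lt hi]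

lemma mk_div {n a : ℕ} {i j : ℕ} (ha : 0 < a) (hi : i < a) (h : a * j + i < n) :
    (((⟨a * j + i, h⟩ : Fin n)) : ℕ) / a = j := by
  simp [Nat.mul_add_div ha, Nat.div_eq_of_lt hi]

namespace MexAux9
open MexAux MexAux2 MexAux3 MexAux4 MexAux5 MexAux6 MexAux7 MexAux8 Walk

variable {n a : ℕ}

lemma consG_clique (ha : 2 ≤ a) (hn : a ^ 2 + 1 ≤ n) : a ≤ mpNum (consG n a) := by
  have ha0 : 0 < a := by omega
  have hsq : a ^ 2 = a * a := sq a
  have haJ : a ≤ n / a := by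
    rw [Nat.le_div_iff_mul_le ha0]
    omega
  have hval : ∀ k : Fin a, a * (k : ℕ) + (k : ℕ) < n :=
    fun k => mk_lt ha0 k.2 (lt_of_lt_of_le k.2 haJ)
  set f : Fin a → Fin n := fun k => ⟨a * (k : ℕ) + (k : ℕ), hval k⟩ with hfdef
  have hfmod : ∀ k : Fin a, ((f k : Fin n) : ℕ) % a = (k : ℕ) := fun k => mk_mod k.2 _
  have hfdiv : ∀ k : Fin a, ((f k : Fin n) : ℕ) / a = (k : ℕ) := fun k => mk_div ha0 k.2 _
  have hinj : Function.Injective f := by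
    intro k k' h
    have := congrArg (fun v : Fin n => (v : ℕ) % a) h
    simp only [hfmod] at this
    exact Fin.ext this
  have hclique : (Set.range f).Pairwise (consG n a).Adj := by
    rintro _ ⟨k, rfl⟩ _ ⟨k', rfl⟩ hne
    have hkk' : (k : ℕ) ≠ (k' : ℕ) := fun h => hne (congrArg f (Fin.ext h))
    rw [consG_adj, hfmod, hfmod, hfdiv, hfdiv]
    exact ⟨hkk', Or.inl hkk'⟩
  have hmp : IsMpSet (consG n a) (Set.range f) := isMpSet_of_clique hclique
  have hcard : (Set.range f).ncard = a := by
    rw [← Set.image_univ, Set.ncard_image_of_injective _ hinj, Set.ncard_univ]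
    simp
  calc a = (Set.range f).ncard := hcard.symm
    _ ≤ mpNum (consG n a) := le_mpNum hmp

end MexAux9

namespace MexAux10
open MexAux MexAux2 MexAux3 MexAux4 MexAux5 MexAux6 MexAux7 MexAux8 MexAux9 Walk

variable {n a : ℕ}

lemma neMod {v w : Fin n} (h : (v : ℕ) % a ≠ (w : ℕ) % a) : v ≠ w :=
  fun he => h (by rw [he])

lemma neDiv {v w : Fin n} (h : (v : ℕ) / a ≠ (w : ℕ) / a) : v ≠ w :=
  fun he => h (by rw [he])

lemma div_le_J (ha0 : 0 < a) (v : Fin n) : (v : ℕ) / a ≤ n / a :=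
  Nat.div_le_div_right (le_of_lt v.2)

lemma caseB' (ha : 2 ≤ a) {S : Set (Fin n)} (hS : IsMpSet (consG n a) S)
    {x y z : Fin n} (hx : x ∈ S) (hy : y ∈ S) (hz : z ∈ S)
    (hxy : x ≠ y) (hxz : x ≠ z) (hyz : y ≠ z)
    (exy : (x : ℕ) % a = (y : ℕ) % a) (exz : (x : ℕ) % a = (z : ℕ) % a)
    (hjx : (x : ℕ) / a ≠ n / a) (hjz : (z : ℕ) / a ≠ n / a) : False := by
  have ha0 : 0 < a := by omega
  have eyz : (y : ℕ) % a = (z : ℕ) % a := exy ▸ exz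
  set i1 : ℕ := if (x : ℕ) % a = 0 then 1 else 0 with hi1def
  have hi1a : i1 < a := by rw [hi1def]; split <;> omega
  have hi1 : i1 ≠ (x : ℕ) % a := by rw [hi1def]; split <;> omega
  have jxy : (x : ℕ) / a ≠ (y : ℕ) / a := fun h => hxy (fin_eq_of_mod_div ha0 exy h)
  have jxz : (x : ℕ) / a ≠ (z : ℕ) / a := fun h => hxz (fin_eq_of_mod_div ha0 exz h)
  have jyz : (y : ℕ) / a ≠ (z : ℕ) / a := fun h => hyz (fin_eq_of_mod_div ha0 eyz h)
  have hjxJ : (x : ℕ) / a < n / a := lt_of_le_of_ne (div_le_J ha0 x) hjx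
  have hjzJ : (z : ℕ) / a < n / a := lt_of_le_of_ne (div_le_J ha0 z) hjz
  set u : Fin n := ⟨a * ((z : ℕ) / a) + i1, mk_lt ha0 hi1a hjzJ⟩ with hudef
  set w : Fin n := ⟨a * ((x : ℕ) / a) + i1, mk_lt ha0 hi1a hjxJ⟩ with hwdef
  have umod : (u : ℕ) % a = i1 := mk_mod hi1a _
  have udiv : (u : ℕ) / a = (z : ℕ) / a := mk_div ha0 hi1a _
  have wmod : (w : ℕ) % a = i1 := mk_mod hi1a _
  have wdiv : (w : ℕ) / a = (x : ℕ) / a := mk_div ha0 hi1a _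
  have h01 : (consG n a).Adj x u := by
    rw [consG_adj, umod, udiv]; exact ⟨fun h => hi1 h.symm, Or.inl jxz⟩
  have h12 : (consG n a).Adj u y := by
    rw [consG_adj, umod, udiv]
    exact ⟨fun h => hi1 (h.trans exy.symm), Or.inl (Ne.symm jyz)⟩
  have h23 : (consG n a).Adj y w := by
    rw [consG_adj, wmod, wdiv]
    exact ⟨fun h => hi1 (exy ▸ h.symm), Or.inl (Ne.symm jxy)⟩
  have h34 : (consG n a).Adj w z := by
    rw [consG_adj, wmod, wdiv]
    exact ⟨fun h => hi1 (h.trans exz.symm), Or.inl jxz⟩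
  have h02 : ¬(consG n a).Adj x y := (not_consG_adj _ _).mpr (Or.inl exy)
  have h03 : ¬(consG n a).Adj x w := by
    rw [not_consG_adj, wmod, wdiv]; exact Or.inr ⟨rfl, hjx⟩
  have h04 : ¬(consG n a).Adj x z := (not_consG_adj _ _).mpr (Or.inl exz)
  have h13 : ¬(consG n a).Adj u w := by
    rw [not_consG_adj, umod, wmod]; exact Or.inl rfl
  have h14 : ¬(consG n a).Adj u z := by
    rw [not_consG_adj, umod, udiv]; exact Or.inr ⟨rfl, hjz⟩
  have h24 : ¬(consG n a).Adj y z := (not_consG_adj _ _).mpr (Or.inl eyz)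
  have n13 : u ≠ w := neDiv (by rw [udiv, wdiv]; exact Ne.symm jxz)
  have n14 : u ≠ z := neMod (by rw [umod]; exact fun h => hi1 (h.trans exz.symm))
  have n03 : x ≠ w := neMod (by rw [wmod]; exact fun h => hi1 h.symm)
  obtain ⟨p, hp, m0, m1, m2, m3, m4⟩ :=
    induced_P5 h01 h12 h23 h34 h02 h03 h04 h13 h14 h24 hxy n03 hxz n13 n14 hyz
  exact not_isMpSet_of_three hp hx hy hz m0 m2 m4 hxy hxz hyz hS

lemma caseB (ha : 2 ≤ a) {S : Set (Fin n)} (hS : IsMpSet (consG n a) S)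
    {x y z : Fin n} (hx : x ∈ S) (hy : y ∈ S) (hz : z ∈ S)
    (hxy : x ≠ y) (hxz : x ≠ z) (hyz : y ≠ z)
    (exy : (x : ℕ) % a = (y : ℕ) % a) (exz : (x : ℕ) % a = (z : ℕ) % a) : False := by
  have ha0 : 0 < a := by omega
  have eyz : (y : ℕ) % a = (z : ℕ) % a := exy ▸ exz
  by_cases hjx : (x : ℕ) / a = n / a
  · -- x is the top vertex; use y, x, z with outer y z
    have hjy : (y : ℕ) / a ≠ n / a := fun h =>
      hxy (fin_eq_of_mod_div ha0 exy (hjx.trans h.symm))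
    have hjz : (z : ℕ) / a ≠ n / a := fun h =>
      hxz (fin_eq_of_mod_div ha0 exz (hjx.trans h.symm))
    exact caseB' ha hS hy hx hz hxy.symm hyz hxz exy.symm eyz hjy hjz
  · by_cases hjz : (z : ℕ) / a = n / a
    · -- z is top; use x, z, y with outer x y
      have hjy : (y : ℕ) / a ≠ n / a := fun h =>
        hyz (fin_eq_of_mod_div ha0 eyz (h.trans hjz.symm))
      exact caseB' ha hS hx hz hy hxz hxy hyz.symm exz exy hjx hjy
    · exact caseB' ha hS hx hy hz hxy hxz hyz exy exz hjx hjz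

end MexAux10

namespace MexAux11
open MexAux MexAux2 MexAux3 MexAux4 MexAux5 MexAux6 MexAux7 MexAux8 MexAux9 MexAux10 Walk

variable {n a : ℕ}

lemma caseC (ha : 2 ≤ a) (hn : a ^ 2 + 1 ≤ n) {S : Set (Fin n)}
    (hS : IsMpSet (consG n a) S) {x y z : Fin n}
    (hx : x ∈ S) (hy : y ∈ S) (hz : z ∈ S)
    (hxy : x ≠ y) (hxz : x ≠ z) (hyz : y ≠ z)
    (exy : (x : ℕ) % a = (y : ℕ) % a) (hzres : (z : ℕ) % a ≠ (x : ℕ) % a)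
    (hnzx : ¬(consG n a).Adj z x) : False := by
  have ha0 : 0 < a := by omega
  have hsq : a ^ 2 = a * a := sq a
  have haJ : a ≤ n / a := by rw [Nat.le_div_iff_mul_le ha0]; omega
  obtain ⟨hjzx, hjzJ⟩ : (z : ℕ) / a = (x : ℕ) / a ∧ (z : ℕ) / a ≠ n / a := by
    rcases (not_consG_adj z x).mp hnzx with h | h
    · exact absurd h hzres
    · exact h
  have hjxJ : (x : ℕ) / a ≠ n / a := hjzx ▸ hjzJ
  have jxy : (x : ℕ) / a ≠ (y : ℕ) / a := fun h => hxy (fin_eq_of_mod_div ha0 exy h)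
  have hadjzy : (consG n a).Adj z y := by
    rw [consG_adj]
    exact ⟨fun h => hzres (h.trans exy.symm), Or.inl (hjzx ▸ jxy)⟩
  have hjxJlt : (x : ℕ) / a < n / a := lt_of_le_of_ne (div_le_J ha0 x) hjxJ
  have izlt : (z : ℕ) % a < a := Nat.mod_lt _ ha0
  by_cases hex : ∃ j, j < n / a ∧ j ≠ (x : ℕ) / a ∧ j ≠ (y : ℕ) / a
  · obtain ⟨j, hjJ, hj1, hj2⟩ := hex
    set u : Fin n := ⟨a * j + (z : ℕ) % a, mk_lt ha0 izlt hjJ⟩ with hudef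
    have umod : (u : ℕ) % a = (z : ℕ) % a := mk_mod izlt _
    have udiv : (u : ℕ) / a = j := mk_div ha0 izlt _
    have h01 : (consG n a).Adj x u := by
      rw [consG_adj, umod, udiv]
      exact ⟨Ne.symm hzres, Or.inl (Ne.symm hj1)⟩
    have h12 : (consG n a).Adj u y := by
      rw [consG_adj, umod, udiv]
      exact ⟨fun h => hzres (h.trans exy.symm), Or.inl hj2⟩
    have h23 : (consG n a).Adj y z := hadjzy.symm
    have h02 : ¬(consG n a).Adj x y := (not_consG_adj _ _).mpr (Or.inl exy)
    have h03 : ¬(consG n a).Adj x z := fun h => hnzx h.symm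
    have h13 : ¬(consG n a).Adj u z := by
      rw [not_consG_adj, umod]; exact Or.inl rfl
    have n13 : u ≠ z := neDiv (by rw [udiv]; exact fun h => hj1 (h.trans hjzx))
    obtain ⟨p, hp, m0, m1, m2, m3⟩ :=
      induced_P4 h01 h12 h23 h02 h03 h13 hxy hxz n13
    exact not_isMpSet_of_three hp hx hy hz m0 m2 m3 hxy hxz hyz hS
  · push_neg at hex
    -- every j < n/a other than x/a equals y/a
    have hyJ : (y : ℕ) / a < n / a := by
      by_contra hyJ'
      push_neg at hyJ'
      have h0 : (0 : ℕ) = (x : ℕ) / a ∨ (0 : ℕ) = (y : ℕ) / a := by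
        rcases eq_or_ne (0 : ℕ) ((x : ℕ) / a) with h | h
        · exact Or.inl h
        · exact Or.inr (hex 0 (by omega) h)
      have h1 : (1 : ℕ) = (x : ℕ) / a ∨ (1 : ℕ) = (y : ℕ) / a := by
        rcases eq_or_ne (1 : ℕ) ((x : ℕ) / a) with h | h
        · exact Or.inl h
        · exact Or.inr (hex 1 (by omega) h)
      omega
    have d0 : (0 : ℕ) = (x : ℕ) / a ∨ (0 : ℕ) = (y : ℕ) / a := by
      rcases eq_or_ne (0 : ℕ) ((x : ℕ) / a) with h | h
      · exact Or.inl h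
      · exact Or.inr (hex 0 (by omega) h)
    have d1 : (1 : ℕ) = (x : ℕ) / a ∨ (1 : ℕ) = (y : ℕ) / a := by
      rcases eq_or_ne (1 : ℕ) ((x : ℕ) / a) with h | h
      · exact Or.inl h
      · exact Or.inr (hex 1 (by omega) h)
    have hJ2 : n / a = 2 := by
      by_contra hJ'
      have d2 : (2 : ℕ) = (x : ℕ) / a ∨ (2 : ℕ) = (y : ℕ) / a := by
        rcases eq_or_ne (2 : ℕ) ((x : ℕ) / a) with h | h
        · exact Or.inl h
        · exact Or.inr (hex 2 (by omega) h)
      omega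
    have ha2 : a = 2 := by omega
    have h4 : a * (n / a) = 4 := by rw [hJ2, ha2]
    have haa : a * a = 4 := by rw [ha2]
    have hmle : a * (n / a) ≤ n := Nat.mul_div_le n a
    have htop : a * (n / a) + 0 < n := by omega
    set u0 : Fin n := ⟨a * (n / a) + 0, htop⟩ with hu0def
    have u0mod : (u0 : ℕ) % a = 0 := mk_mod ha0 _
    have u0div : (u0 : ℕ) / a = n / a := mk_div ha0 ha0 _
    by_cases hiz : (z : ℕ) % a = 0
    · -- C2a : z has residue 0, top vertex has residue 0
      have h01 : (consG n a).Adj x u0 := by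
        rw [consG_adj, u0mod, u0div]
        exact ⟨fun h => hzres (hiz.trans h.symm), Or.inl hjxJ⟩
      have h12 : (consG n a).Adj u0 y := by
        rw [consG_adj, u0mod, u0div]
        exact ⟨fun h => hzres (hiz.trans (h.trans exy.symm)), Or.inr rfl⟩
      have h23 : (consG n a).Adj y z := hadjzy.symm
      have h02 : ¬(consG n a).Adj x y := (not_consG_adj _ _).mpr (Or.inl exy)
      have h03 : ¬(consG n a).Adj x z := fun h => hnzx h.symm
      have h13 : ¬(consG n a).Adj u0 z := by
        rw [not_consG_adj, u0mod]; exact Or.inl hiz.symm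
      have n01 : x ≠ u0 := h01.ne
      have n13 : u0 ≠ z := neDiv (by rw [u0div]; exact fun h => hjzJ h.symm)
      obtain ⟨p, hp, m0, m1, m2, m3⟩ :=
        induced_P4 h01 h12 h23 h02 h03 h13 hxy hxz n13
      exact not_isMpSet_of_three hp hx hy hz m0 m2 m3 hxy hxz hyz hS
    · -- C2b : x has residue 0
      have hix : (x : ℕ) % a = 0 := by
        have := Nat.mod_lt (x : ℕ) ha0
        omega
      set t : Fin n := ⟨a * ((y : ℕ) / a) + (z : ℕ) % a, mk_lt ha0 izlt hyJ⟩ with htdef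
      have tmod : (t : ℕ) % a = (z : ℕ) % a := mk_mod izlt _
      have tdiv : (t : ℕ) / a = (y : ℕ) / a := mk_div ha0 izlt _
      have h01 : (consG n a).Adj y z := hadjzy.symm
      have h12 : (consG n a).Adj z u0 := by
        rw [consG_adj, u0mod, u0div]
        exact ⟨hiz, Or.inl hjzJ⟩
      have h23 : (consG n a).Adj u0 t := by
        rw [consG_adj, u0mod, u0div, tmod, tdiv]
        exact ⟨Ne.symm hiz, Or.inr rfl⟩
      have h34 : (consG n a).Adj t x := by
        rw [consG_adj, tmod, tdiv]
        exact ⟨hzres, Or.inl (Ne.symm jxy)⟩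
      have h02 : ¬(consG n a).Adj y u0 := by
        rw [not_consG_adj, u0mod]
        exact Or.inl (exy.symm.trans hix)
      have h03 : ¬(consG n a).Adj y t := by
        rw [not_consG_adj, tmod, tdiv]
        exact Or.inr ⟨rfl, ne_of_lt hyJ⟩
      have h04 : ¬(consG n a).Adj y x := (not_consG_adj _ _).mpr (Or.inl exy.symm)
      have h13 : ¬(consG n a).Adj z t := by
        rw [not_consG_adj, tmod]; exact Or.inl rfl
      have h14 : ¬(consG n a).Adj z x := hnzx
      have h24 : ¬(consG n a).Adj u0 x := by
        rw [not_consG_adj, u0mod]; exact Or.inl hix.symm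
      have n02 : y ≠ u0 := neDiv (by rw [u0div]; exact fun h => (ne_of_lt hyJ) h)
      have n03 : y ≠ t := neMod (by
        rw [tmod]
        intro h
        exact hiz (h.symm.trans (exy.symm.trans hix)))
      have n13 : z ≠ t := neDiv (by rw [tdiv]; exact fun h => jxy (hjzx ▸ h))
      have n14 : z ≠ x := fun h => hxz h.symm
      have n24 : u0 ≠ x := neDiv (by rw [u0div]; exact Ne.symm hjxJ)
      obtain ⟨p, hp, m0, m1, m2, m3, m4⟩ :=
        induced_P5 h01 h12 h23 h34 h02 h03 h04 h13 h14 h24 n02 n03 (fun h => hxy h.symm) n13 n14 n24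
      exact not_isMpSet_of_three hp hy hz hx m0 m1 m4 hyz (fun h => hxy h.symm)
        (fun h => hxz h.symm) hS

end MexAux11

namespace MexAux12
open MexAux MexAux2 MexAux3 MexAux4 MexAux5 MexAux6 MexAux7 MexAux8 MexAux9 MexAux10 MexAux11 Walk

variable {n a : ℕ}

lemma consG_mp_le (ha : 2 ≤ a) (hn : a ^ 2 + 1 ≤ n) :
    ∀ S : Set (Fin n), IsMpSet (consG n a) S → S.ncard ≤ a := by
  intro S hS
  by_contra hc
  push_neg at hc
  have ha0 : 0 < a := by omega
  classical
  -- pigeonhole: two distinct elements with the same residue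
  obtain ⟨x, hxm, y, hym, hxy, hmod⟩ :
      ∃ x ∈ S.toFinset, ∃ y ∈ S.toFinset, x ≠ y ∧
        (⟨(x : ℕ) % a, Nat.mod_lt _ ha0⟩ : Fin a) = ⟨(y : ℕ) % a, Nat.mod_lt _ ha0⟩ := by
    refine Finset.exists_ne_map_eq_of_card_lt_of_maps_to
      (t := (Finset.univ : Finset (Fin a))) ?_ (fun v _ => Finset.mem_univ _)
    have h2 : S.ncard = S.toFinset.card := Set.ncard_eq_toFinset_card' S
    simp only [Finset.card_univ, Fintype.card_fin]
    omega
  have hx : x ∈ S := Set.mem_toFinset.mp hxm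
  have hy : y ∈ S := Set.mem_toFinset.mp hym
  have exy : (x : ℕ) % a = (y : ℕ) % a := congrArg Fin.val hmod
  by_cases hB : ∃ z ∈ S, z ≠ x ∧ z ≠ y ∧ (z : ℕ) % a = (x : ℕ) % a
  · obtain ⟨z, hz, hzx, hzy, hez⟩ := hB
    exact caseB ha hS hx hy hz hxy (Ne.symm hzx) (Ne.symm hzy) exy hez.symm
  · have hne : (S \ {x, y}).Nonempty := by
      rw [Set.nonempty_iff_ne_empty]
      intro hempty
      have hsub : S ⊆ {x, y} := by
        intro w hw
        by_contra hw2
        exact (Set.eq_empty_iff_forall_notMem.mp hempty w) ⟨hw, hw2⟩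
      have h1 : S.ncard ≤ ({x, y} : Set (Fin n)).ncard :=
        Set.ncard_le_ncard hsub (Set.toFinite _)
      rw [Set.ncard_pair hxy] at h1
      omega
    obtain ⟨z, hzS, hznot⟩ := hne
    have hzx : z ≠ x := fun h => hznot (by rw [h]; exact Set.mem_insert _ _)
    have hzy : z ≠ y := fun h => hznot (by rw [h]; exact Set.mem_insert_of_mem _ rfl)
    have hzres : (z : ℕ) % a ≠ (x : ℕ) % a := fun h => hB ⟨z, hzS, hzx, hzy, h⟩
    by_cases hA : (consG n a).Adj z x ∧ (consG n a).Adj z y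
    · obtain ⟨p, hp, m0, m1, m2⟩ := induced_P3 hA.1.symm hA.2
        ((not_consG_adj _ _).mpr (Or.inl exy)) hxy
      exact not_isMpSet_of_three hp hx hy hzS m0 m2 m1 hxy (Ne.symm hzx) (Ne.symm hzy) hS
    · rcases not_and_or.mp hA with h | h
      · exact caseC ha hn hS hx hy hzS hxy (Ne.symm hzx) (Ne.symm hzy) exy hzres h
      · exact caseC ha hn hS hy hx hzS (Ne.symm hxy) (Ne.symm hzy) (Ne.symm hzx) exy.symm
          (fun hh => hzres (hh.trans exy.symm)) h

lemma consG_mpNum (ha : 2 ≤ a) (hn : a ^ 2 + 1 ≤ n) : mpNum (consG n a) = a :=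
  le_antisymm (mpNum_le (consG_mp_le ha hn)) (consG_clique ha hn)

end MexAux12

namespace MexAux13
open MexAux MexAux2 MexAux3 MexAux4 MexAux5 MexAux6 MexAux7 MexAux8 MexAux9 MexAux10 MexAux11 MexAux12 Walk Finset

variable {n a : ℕ}

lemma consG_le_turan : consG n a ≤ turanGraph n a := by intro v w h; exact h.1

lemma consG_edge_count (ha : 2 ≤ a) (hn : a ^ 2 + 1 ≤ n) :
    (turanGraph n a).edgeSet.ncard ≤ (consG n a).edgeSet.ncard + (n / a) * a.choose 2 := by
  classical
  have ha0 : 0 < a := by omega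
  rw [edgeSet_ncard_eq, edgeSet_ncard_eq]
  set D : Finset (Sym2 (Fin n)) :=
    (turanGraph n a).edgeFinset \ (consG n a).edgeFinset with hD
  have hsub : (turanGraph n a).edgeFinset ⊆ (consG n a).edgeFinset ∪ D := by
    intro e he
    by_cases h : e ∈ (consG n a).edgeFinset
    · exact Finset.mem_union_left _ h
    · exact Finset.mem_union_right _ (Finset.mem_sdiff.mpr ⟨he, h⟩)
  have hcard1 : (turanGraph n a).edgeFinset.card ≤ (consG n a).edgeFinset.card + D.card :=
    le_trans (Finset.card_le_card hsub) (Finset.card_union_le _ _)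
  -- now bound D.card
  set ρ : Fin n → Fin a := fun v => ⟨(v : ℕ) % a, Nat.mod_lt _ ha0⟩ with hρ
  set f : Sym2 (Fin n) → ℕ × Sym2 (Fin a) := fun e =>
    (Sym2.lift ⟨fun (v w : Fin n) => max ((v : ℕ) / a) ((w : ℕ) / a),
        fun v w => max_comm _ _⟩ e, e.map ρ) with hf
  have hDmem : ∀ e ∈ D, ∀ v w, e = s(v, w) →
      ((v : ℕ) % a ≠ (w : ℕ) % a ∧ (v : ℕ) / a = (w : ℕ) / a ∧ (v : ℕ) / a < n / a) := by
    intro e he v w hvw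
    subst hvw
    rw [hD, Finset.mem_sdiff, mem_edgeFinset, mem_edgeFinset, SimpleGraph.mem_edgeSet, SimpleGraph.mem_edgeSet] at he
    obtain ⟨ht, hc⟩ := he
    have ht' : (v : ℕ) % a ≠ (w : ℕ) % a := ht
    rcases (not_consG_adj v w).mp hc with h | h
    · exact absurd h ht'
    · exact ⟨ht', h.1, lt_of_le_of_ne (div_le_J ha0 v) h.2⟩
  have hmaps : ∀ e ∈ D, f e ∈ (Finset.range (n / a)) ×ˢ (⊤ : SimpleGraph (Fin a)).edgeFinset := by
    intro e he
    induction e using Sym2.inductionOn with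
    | hf v w =>
      obtain ⟨h1, h2, h3⟩ := hDmem _ he v w rfl
      rw [Finset.mem_product]
      constructor
      · simp only [hf, Sym2.lift_mk]
        rw [Finset.mem_range]
        simp only [h2, max_self]
        exact h2 ▸ h3
      · simp only [hf, Sym2.map_pair_eq, mem_edgeFinset, SimpleGraph.mem_edgeSet, top_adj, hρ]
        intro hcon
        exact h1 (congrArg Fin.val hcon)
  have hinj : Set.InjOn f D := by
    intro e he e' he' hfe
    induction e using Sym2.inductionOn with
    | hf v w =>
      induction e' using Sym2.inductionOn with
      | hf v' w' =>
        obtain ⟨h1, h2, h3⟩ := hDmem _ he v w rfl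
        obtain ⟨h1', h2', h3'⟩ := hDmem _ he' v' w' rfl
        rw [hf] at hfe
        simp only [Sym2.lift_mk, Sym2.map_pair_eq, Prod.mk.injEq] at hfe
        obtain ⟨hj, hres⟩ := hfe
        rw [h2, max_self, h2', max_self] at hj
        -- hj : w/a = w'/a
        rw [Sym2.eq_iff] at hres
        rcases hres with ⟨hvv, hww⟩ | ⟨hvw, hwv⟩
        · have e1 : v = v' := fin_eq_of_mod_div ha0 (congrArg Fin.val hvv) (by omega)
          have e2 : w = w' := fin_eq_of_mod_div ha0 (congrArg Fin.val hww) hj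
          rw [e1, e2]
        · have e1 : v = w' := fin_eq_of_mod_div ha0 (congrArg Fin.val hvw) (by omega)
          have e2 : w = v' := fin_eq_of_mod_div ha0 (congrArg Fin.val hwv) (by omega)
          rw [e1, e2, Sym2.eq_swap]
  have hcard2 : D.card ≤ (n / a) * a.choose 2 := by
    have := Finset.card_le_card_of_injOn f hmaps hinj
    rwa [Finset.card_product, Finset.card_range, card_edgeFinset_top_eq_card_choose_two,
      Fintype.card_fin] at this
  omega

end MexAux13


open MexAux8 MexAux12 MexAux13 in
theorem mexNum_asymptotic (a n : ℕ) (ha : 2 ≤ a) (hn : a ^ 2 + 1 ≤ n) :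
    (turanGraph n a).edgeSet.ncard - (n / a) * a.choose 2 ≤ mexNum n a ∧
    mexNum n a ≤ (turanGraph n a).edgeSet.ncard - 1 := by
  constructor
  · have hmem : (consG n a).edgeSet.ncard ∈
        {m | ∃ G : SimpleGraph (Fin n), mpNum G = a ∧ G.edgeSet.ncard = m} :=
      ⟨consG n a, consG_mpNum ha hn, rfl⟩
    have hbdd : BddAbove {m | ∃ G : SimpleGraph (Fin n), mpNum G = a ∧ G.edgeSet.ncard = m} := by
      refine ⟨Nat.card (Sym2 (Fin n)), ?_⟩
      rintro m ⟨G, _, rfl⟩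
      have := Set.ncard_le_ncard (Set.subset_univ G.edgeSet) (Set.toFinite _)
      rwa [Set.ncard_univ] at this
    have hle : (consG n a).edgeSet.ncard ≤ mexNum n a := le_csSup hbdd hmem
    have hcount := consG_edge_count ha hn
    omega
  · refine csSup_le' ?_
    rintro m ⟨G, hmp, rfl⟩
    exact edge_le_of_mpNum_eq ha hn G hmp
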